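/- Suppose that G is a finitely generated abelian group of torsion-free rank r, that the kernel of φ' is finite, and that Nat.card G[2] · (Nat.card (G'[φ'] / φ(G[ε])))² · Nat.card (G[ε] / ε(G[2])) = 2⁴. Then the quotient groups G'/φ(G) and G/φ'(G') are finite and 2^(4+r) = (Nat.card (G'/φ(G)))² · (Nat.card (G/φ'(G')))². -/

import Mathlib

section MWAux

private lemma two_apply {G : Type*} [AddCommGroup G] (x : G) :
    (2 • AddMonoidHom.id G) x = 2 • x := rfl

private lemma coker_eq_ker {G : Type*} [AddCommGroup G] [Finite G] (f : G →+ G) :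
    f.range.index = Nat.card f.ker := by
  have h1 := AddSubgroup.card_eq_card_quotient_mul_card_addSubgroup f.range
  have h2 := AddSubgroup.card_eq_card_quotient_mul_card_addSubgroup f.ker
  have h3 : Nat.card (G ⧸ f.ker) = Nat.card f.range :=
    Nat.card_congr (QuotientAddGroup.quotientKerEquivRange f).toEquiv
  have hpos : 0 < Nat.card f.range := Nat.card_pos
  refine Nat.eq_of_mul_eq_mul_right hpos ?_
  calc f.range.index * Nat.card f.range
      = Nat.card G := by rw [AddSubgroup.index_eq_card]; exact h1.symm
    _ = Nat.card f.range * Nat.card f.ker := by rw [h2, h3]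
    _ = Nat.card f.ker * Nat.card f.range := mul_comm _ _

private lemma index_range_two_congr {G G' : Type*} [AddCommGroup G] [AddCommGroup G']
    (e : G ≃+ G') :
    (2 • AddMonoidHom.id G).range.index = (2 • AddMonoidHom.id G').range.index ∧
      Nat.card (2 • AddMonoidHom.id G).ker = Nat.card (2 • AddMonoidHom.id G').ker := by
  have hrange : AddSubgroup.map e.toAddMonoidHom (2 • AddMonoidHom.id G).range
      = (2 • AddMonoidHom.id G').range := by
    ext x
    simp only [AddSubgroup.mem_map, AddMonoidHom.mem_range, two_apply]
    constructor
    · rintro ⟨y, ⟨z, rfl⟩, rfl⟩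
      exact ⟨e z, (map_nsmul e 2 z).symm⟩
    · rintro ⟨z, rfl⟩
      exact ⟨2 • e.symm z, ⟨e.symm z, rfl⟩, by rw [map_nsmul]; simp⟩
  have hker : AddSubgroup.map e.toAddMonoidHom (2 • AddMonoidHom.id G).ker
      = (2 • AddMonoidHom.id G').ker := by
    ext x
    simp only [AddSubgroup.mem_map, AddMonoidHom.mem_ker, two_apply]
    constructor
    · rintro ⟨y, hy, rfl⟩
      rw [AddEquiv.coe_toAddMonoidHom, ← map_nsmul, hy, map_zero]
    · intro hx
      refine ⟨e.symm x, ?_, e.apply_symm_apply x⟩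
      have := congrArg e.symm hx
      rw [map_nsmul, map_zero] at this
      exact this
  have hkb : e.toAddMonoidHom.ker = ⊥ := (AddMonoidHom.ker_eq_bot_iff _).mpr e.injective
  have hrt : e.toAddMonoidHom.range = ⊤ := AddMonoidHom.range_eq_top.mpr e.surjective
  constructor
  · have h := AddSubgroup.index_map (2 • AddMonoidHom.id G).range e.toAddMonoidHom
    rw [hrange, hkb, hrt, sup_bot_eq, AddSubgroup.index_top, mul_one] at h
    exact h.symm
  · rw [← hker]
    exact Nat.card_congr
      (AddSubgroup.equivMapOfInjective _ e.toAddMonoidHom e.injective).toEquiv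

end MWAux


private lemma range_two_prod (A B : Type*) [AddCommGroup A] [AddCommGroup B] :
    (2 • AddMonoidHom.id (A × B)).range
      = ((2 • AddMonoidHom.id A).range).prod ((2 • AddMonoidHom.id B).range) := by
  ext x
  simp only [AddMonoidHom.mem_range, AddSubgroup.mem_prod, two_apply, Prod.exists]
  constructor
  · rintro ⟨a, b, rfl⟩
    exact ⟨⟨a, rfl⟩, ⟨b, rfl⟩⟩
  · rintro ⟨⟨a, ha⟩, ⟨b, hb⟩⟩
    exact ⟨a, b, by rw [Prod.smul_mk, ha, hb]⟩

private lemma ker_two_prod (A B : Type*) [AddCommGroup A] [AddCommGroup B] :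
    (2 • AddMonoidHom.id (A × B)).ker
      = ((2 • AddMonoidHom.id A).ker).prod ((2 • AddMonoidHom.id B).ker) := by
  ext x
  simp only [AddMonoidHom.mem_ker, AddSubgroup.mem_prod, two_apply, Prod.ext_iff,
    Prod.smul_fst, Prod.smul_snd, Prod.fst_zero, Prod.snd_zero]

private lemma range_two_int : (2 • AddMonoidHom.id ℤ).range = AddSubgroup.zmultiples (2 : ℤ) := by
  ext x
  simp only [AddMonoidHom.mem_range, two_apply, AddSubgroup.mem_zmultiples_iff]
  constructor
  · rintro ⟨y, rfl⟩
    exact ⟨y, by rw [smul_eq_mul, nsmul_eq_mul]; push_cast; ring⟩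
  · rintro ⟨k, rfl⟩
    exact ⟨k, by rw [smul_eq_mul, nsmul_eq_mul]; push_cast; ring⟩

private lemma range_two_pi {ι : Type} [Fintype ι] :
    (2 • AddMonoidHom.id (ι → ℤ)).range
      = AddSubgroup.pi Set.univ (fun _ => (2 • AddMonoidHom.id ℤ).range) := by
  ext g
  simp only [AddMonoidHom.mem_range, two_apply, AddSubgroup.mem_pi, Set.mem_univ, true_implies]
  constructor
  · rintro ⟨y, rfl⟩ i
    exact ⟨y i, rfl⟩
  · intro h
    choose y hy using h
    exact ⟨y, funext fun i => by rw [Pi.smul_apply, hy]⟩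

private lemma ker_two_pi {ι : Type} [Fintype ι] :
    (2 • AddMonoidHom.id (ι → ℤ)).ker = ⊥ := by
  ext g
  simp only [AddMonoidHom.mem_ker, two_apply, AddSubgroup.mem_bot]
  constructor
  · intro h
    funext i
    have h2 : (2 : ℤ) * g i = 0 := by
      have := congrFun h i
      rw [Pi.smul_apply, nsmul_eq_mul] at this
      push_cast at this
      simpa using this
    have : g i = 0 := by omega
    simpa using this
  · rintro rfl
    simp

private lemma index_range_two_pi {ι : Type} [Fintype ι] :
    (2 • AddMonoidHom.id (ι → ℤ)).range.index = 2 ^ Fintype.card ι := by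
  rw [range_two_pi, AddSubgroup.index_pi]
  simp [range_two_int, Int.index_zmultiples]

private noncomputable def addEquivToLinearEquivInt {M N : Type*} [AddCommGroup M] [AddCommGroup N]
    [Module ℤ M] [Module ℤ N] (e : M ≃+ N) : M ≃ₗ[ℤ] N :=
  e.toLinearEquiv (fun c x => by
    have h1 := Int.cast_smul_eq_zsmul ℤ c x
    have h2 := Int.cast_smul_eq_zsmul ℤ c (e x)
    rw [Int.cast_id] at h1 h2
    rw [h1, h2]
    exact map_zsmul e c x)

private lemma finrank_eq_of_addEquiv {M N : Type*} [AddCommGroup M] [AddCommGroup N]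
    [Module ℤ M] [Module ℤ N] (e : M ≃+ N) : Module.finrank ℤ M = Module.finrank ℤ N :=
  (addEquivToLinearEquivInt e).finrank_eq

open DirectSum in
private lemma rank_facts {G : Type*} [AddCommGroup G] (hFG : AddGroup.FG G) :
    Nat.card (2 • AddMonoidHom.id G).ker ≠ 0 ∧
      (2 • AddMonoidHom.id G).range.index
        = 2 ^ (Module.finrank ℤ (G ⧸ AddCommGroup.torsion G))
            * Nat.card (2 • AddMonoidHom.id G).ker := by
  classical
  obtain ⟨n, ι, fι, p, hp, k, ⟨f⟩⟩ := AddCommGroup.equiv_free_prod_directSum_zmod G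
  haveI : ∀ i, NeZero (p i ^ k i) := fun i => ⟨pow_ne_zero _ (hp i).pos.ne'⟩
  haveI : ∀ i, Fintype (ZMod (p i ^ k i)) := fun i => ZMod.fintype _
  set D := ⨁ i : ι, ZMod (p i ^ k i) with hD
  haveI hDfin : Finite D :=
    Finite.of_equiv _ (@DFinsupp.equivFunOnFintype ι (fun i => ZMod (p i ^ k i)) _ _).symm
  -- the composite equivalence to (Fin n → ℤ) × D
  set e : G ≃+ (Fin n → ℤ) × D :=
    f.trans ((Finsupp.addEquivFunOnFinite).prodCongr (AddEquiv.refl D)) with he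
  obtain ⟨hidx, hcard⟩ := index_range_two_congr e
  -- compute on the product
  have hidxP : (2 • AddMonoidHom.id ((Fin n → ℤ) × D)).range.index
      = 2 ^ n * Nat.card (2 • AddMonoidHom.id D).ker := by
    rw [range_two_prod, AddSubgroup.index_prod, index_range_two_pi, Fintype.card_fin,
      coker_eq_ker]
  have hcardP : Nat.card (2 • AddMonoidHom.id ((Fin n → ℤ) × D)).ker
      = Nat.card (2 • AddMonoidHom.id D).ker := by
    rw [ker_two_prod]
    rw [Nat.card_congr (AddSubgroup.prodEquiv _ _).toEquiv, Nat.card_prod, ker_two_pi,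
      AddSubgroup.card_bot, one_mul]
  have hkerD : Nat.card (2 • AddMonoidHom.id D).ker ≠ 0 := Nat.card_pos.ne'
  -- the rank equals n
  have hrank : Module.finrank ℤ (G ⧸ AddCommGroup.torsion G) = n := by
    set ψ : G →+ (Fin n →₀ ℤ) := (AddMonoidHom.fst _ _).comp f.toAddMonoidHom with hψ
    have hsurj : Function.Surjective ψ := Prod.fst_surjective.comp f.surjective
    have hkerψ : ψ.ker = AddCommGroup.torsion G := by
      ext x
      rw [AddMonoidHom.mem_ker, AddCommGroup.mem_torsion]
      have hψx : ψ x = (f x).1 := rfl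
      rw [hψx]
      constructor
      · intro h
        obtain ⟨m, hm, hm'⟩ := isOfFinAddOrder_iff_nsmul_eq_zero.mp
          (isOfFinAddOrder_of_finite (f x).2)
        rw [isOfFinAddOrder_iff_nsmul_eq_zero]
        refine ⟨m, hm, f.injective ?_⟩
        rw [map_nsmul, map_zero]
        apply Prod.ext
        · rw [Prod.smul_fst, h, smul_zero, Prod.fst_zero]
        · rw [Prod.smul_snd, hm', Prod.snd_zero]
      · intro h
        obtain ⟨m, hm, hm'⟩ := isOfFinAddOrder_iff_nsmul_eq_zero.mp h
        have h2 : m • (f x) = 0 := by rw [← map_nsmul, hm', map_zero]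
        have h3 : m • (f x).1 = 0 := by rw [← Prod.smul_fst, h2, Prod.fst_zero]
        ext i
        have h4 := congrArg (fun z => z i) h3
        simp only [Finsupp.smul_apply, Finsupp.coe_zero, Pi.zero_apply] at h4
        rw [nsmul_eq_mul] at h4
        have hm0 : (m : ℤ) ≠ 0 := by exact_mod_cast hm.ne'
        simpa [hm.ne'] using h4
    have q : (G ⧸ AddCommGroup.torsion G) ≃+ (Fin n →₀ ℤ) :=
      (QuotientAddGroup.quotientAddEquivOfEq hkerψ.symm).trans
        (QuotientAddGroup.quotientKerEquivOfSurjective ψ hsurj)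
    rw [finrank_eq_of_addEquiv q, Module.finrank_finsupp_self, Fintype.card_fin]
  refine ⟨by rw [hcard, hcardP]; exact hkerD, ?_⟩
  rw [hidx, hcard, hcardP, hidxP, hrank]

theorem mordell_weil_rank_eq {G G' : Type*} [AddCommGroup G] [AddCommGroup G']
    (φ : G →+ G') (φ' : G' →+ G)
    (hε : (φ'.comp φ).comp (φ'.comp φ) = 2 • AddMonoidHom.id G)
    (hFG : AddGroup.FG G) (r : ℕ)
    (hr : Module.finrank ℤ (G ⧸ AddCommGroup.torsion G) = r)
    (hker : Finite φ'.ker)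
    (hcard :
      Nat.card (AddMonoidHom.ker (2 • AddMonoidHom.id G)) *
        Nat.card (φ'.ker ⧸
          ((AddSubgroup.map φ (AddMonoidHom.ker (φ'.comp φ))).addSubgroupOf φ'.ker)) ^ 2 *
        Nat.card ((AddMonoidHom.ker (φ'.comp φ)) ⧸
          ((AddSubgroup.map (φ'.comp φ) (AddMonoidHom.ker (2 • AddMonoidHom.id G))).addSubgroupOf
            (AddMonoidHom.ker (φ'.comp φ)))) = 2 ^ 4) :
    Finite (G' ⧸ φ.range) ∧ Finite (G ⧸ φ'.range) ∧
      2 ^ (4 + r) = Nat.card (G' ⧸ φ.range) ^ 2 * Nat.card (G ⧸ φ'.range) ^ 2 := by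
  set ε : G →+ G := φ'.comp φ with hεdef
  obtain ⟨hc1ne, hidx⟩ := rank_facts hFG
  rw [hr] at hidx
  -- rewrite the card hypothesis in terms of relindex
  have hc2eq : Nat.card (φ'.ker ⧸
        ((AddSubgroup.map φ (AddMonoidHom.ker ε)).addSubgroupOf φ'.ker))
      = (AddSubgroup.map φ ε.ker).relIndex φ'.ker := rfl
  have hc3eq : Nat.card ((AddMonoidHom.ker ε) ⧸
        ((AddSubgroup.map ε (AddMonoidHom.ker (2 • AddMonoidHom.id G))).addSubgroupOf
          (AddMonoidHom.ker ε)))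
      = (AddSubgroup.map ε (2 • AddMonoidHom.id G).ker).relIndex ε.ker := rfl
  rw [hc2eq, hc3eq] at hcard
  set c1 := Nat.card (2 • AddMonoidHom.id G).ker with hc1
  set c2 := (AddSubgroup.map φ ε.ker).relIndex φ'.ker with hc2
  set c3 := (AddSubgroup.map ε (2 • AddMonoidHom.id G).ker).relIndex ε.ker with hc3
  -- intersections
  have hinf1 : φ.range ⊓ φ'.ker = AddSubgroup.map φ ε.ker := by
    ext y
    simp only [AddSubgroup.mem_inf, AddMonoidHom.mem_range, AddMonoidHom.mem_ker,
      AddSubgroup.mem_map, AddMonoidHom.coe_comp, Function.comp_apply, hεdef]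
    constructor
    · rintro ⟨⟨g, rfl⟩, hg⟩
      exact ⟨g, hg, rfl⟩
    · rintro ⟨g, hg, rfl⟩
      exact ⟨⟨g, rfl⟩, hg⟩
  have hinf2 : ε.range ⊓ ε.ker = AddSubgroup.map ε (2 • AddMonoidHom.id G).ker := by
    ext x
    simp only [AddSubgroup.mem_inf, AddMonoidHom.mem_range, AddMonoidHom.mem_ker,
      AddSubgroup.mem_map]
    constructor
    · rintro ⟨⟨g, rfl⟩, hg⟩
      refine ⟨g, ?_, rfl⟩
      have : (ε.comp ε) g = 0 := hg
      rw [hε] at this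
      exact this
    · rintro ⟨g, hg, rfl⟩
      refine ⟨⟨g, rfl⟩, ?_⟩
      have : (ε.comp ε) g = 0 := by rw [hε]; exact hg
      exact this
  -- range identities
  have hrangeε : ε.range = AddSubgroup.map φ' φ.range := AddMonoidHom.range_comp φ' φ
  have hrange2 : (2 • AddMonoidHom.id G).range = AddSubgroup.map ε ε.range := by
    rw [← hε]; exact AddMonoidHom.range_comp ε ε
  -- index equations
  have e3 : ε.range.index = (φ.range ⊔ φ'.ker).index * φ'.range.index := by
    rw [hrangeε]; exact AddSubgroup.index_map φ.range φ'
  have e6 : (2 • AddMonoidHom.id G).range.index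
      = (ε.range ⊔ ε.ker).index * ε.range.index := by
    rw [hrange2]; exact AddSubgroup.index_map ε.range ε
  have e4 : c2 * (φ.range ⊔ φ'.ker).index = φ.range.index := by
    have h := AddSubgroup.relIndex_mul_index (le_sup_left : φ.range ≤ φ.range ⊔ φ'.ker)
    rwa [sup_comm φ.range φ'.ker, AddSubgroup.relIndex_sup_right,
      ← AddSubgroup.inf_relIndex_right, hinf1, ← hc2, sup_comm φ'.ker φ.range] at h
  have e7 : c3 * (ε.range ⊔ ε.ker).index = ε.range.index := by
    have h := AddSubgroup.relIndex_mul_index (le_sup_left : ε.range ≤ ε.range ⊔ ε.ker)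
    rwa [sup_comm ε.range ε.ker, AddSubgroup.relIndex_sup_right,
      ← AddSubgroup.inf_relIndex_right, hinf2, ← hc3, sup_comm ε.ker ε.range] at h
  -- nonvanishing
  have h16 : c1 * c2 ^ 2 * c3 ≠ 0 := by rw [hcard]; positivity
  have hc2ne : c2 ≠ 0 := fun h => h16 (by rw [h]; ring)
  have hc3ne : c3 ≠ 0 := fun h => h16 (by rw [h]; ring)
  have hI2ne : (2 • AddMonoidHom.id G).range.index ≠ 0 := by
    rw [hidx]; positivity
  have hune : (ε.range ⊔ ε.ker).index ≠ 0 := fun h => hI2ne (by rw [e6, h, zero_mul])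
  have hNne : ε.range.index ≠ 0 := fun h => hI2ne (by rw [e6, h, mul_zero])
  have hvne : (φ.range ⊔ φ'.ker).index ≠ 0 := fun h => hNne (by rw [e3, h, zero_mul])
  have hbne : φ'.range.index ≠ 0 := fun h => hNne (by rw [e3, h, mul_zero])
  have hane : φ.range.index ≠ 0 := by
    rw [← e4]; exact mul_ne_zero hc2ne hvne
  have hfin1 : Finite (G' ⧸ φ.range) := by
    rw [AddSubgroup.index_eq_card] at hane
    exact (Nat.card_ne_zero.mp hane).2
  have hfin2 : Finite (G ⧸ φ'.range) := by
    rw [AddSubgroup.index_eq_card] at hbne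
    exact (Nat.card_ne_zero.mp hbne).2
  refine ⟨hfin1, hfin2, ?_⟩
  rw [← AddSubgroup.index_eq_card, ← AddSubgroup.index_eq_card]
  have h1 : φ.range.index * φ'.range.index = c2 * ε.range.index := by
    rw [← e4, e3, mul_assoc]
  have h2 : ε.range.index * ε.range.index = c3 * (2 ^ r * c1) := by
    rw [← hidx, e6, ← e7]; ring
  calc (2 : ℕ) ^ (4 + r) = 2 ^ 4 * 2 ^ r := by rw [pow_add]
    _ = (c1 * c2 ^ 2 * c3) * 2 ^ r := by rw [hcard]
    _ = c2 ^ 2 * (c3 * (2 ^ r * c1)) := by ring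
    _ = c2 ^ 2 * (ε.range.index * ε.range.index) := by rw [h2]
    _ = (c2 * ε.range.index) * (c2 * ε.range.index) := by ring
    _ = (φ.range.index * φ'.range.index) * (φ.range.index * φ'.range.index) := by rw [h1]
    _ = φ.range.index ^ 2 * φ'.range.index ^ 2 := by ring
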